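/- Fix integers N ≥ 1, M ≥ 1 and 1 ≤ K ≤ M₀ ≤ M, and let p(N, M, K) be the probability that throwing N balls uniformly at random into M bins yields at most K non-empty bins. Then p(N, M, K) ≤ (C(M, K)/C(M₀, K)) · (M₀/M)^N. -/

import Mathlib

/-- Probability that throwing `N` balls uniformly at random into `M` bins yields
at most `K` non-empty bins. -/
noncomputable def ballsProb (N M K : ℕ) : ℝ :=
  (Fintype.card {f : Fin N → Fin M // (Finset.univ.image f).card ≤ K} : ℝ) / (M : ℝ) ^ N

open Finset

namespace BallsAux

/-- Number of surjections from `Fin N` onto `Fin i`. -/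
noncomputable def surjCount (N i : ℕ) : ℕ :=
  Fintype.card {g : Fin N → Fin i // Function.Surjective g}

lemma fiber_card (N M : ℕ) (S : Finset (Fin M)) :
    (Finset.univ.filter (fun f : Fin N → Fin M => Finset.univ.image f = S)).card
      = surjCount N S.card := by
  rw [← Fintype.card_subtype]
  unfold surjCount
  have e1 : {f : Fin N → Fin M // Finset.univ.image f = S} ≃
      {g : Fin N → S // Function.Surjective g} :=
    { toFun := fun f => ⟨fun n => ⟨f.1 n, by
        have h := Finset.mem_image_of_mem f.1 (Finset.mem_univ n)
        rwa [f.2] at h⟩, by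
        rintro ⟨s, hs⟩
        rw [← f.2] at hs
        obtain ⟨n, -, hn⟩ := Finset.mem_image.mp hs
        exact ⟨n, Subtype.ext hn⟩⟩
      invFun := fun g => ⟨fun n => (g.1 n : Fin M), by
        ext x
        simp only [Finset.mem_image, Finset.mem_univ, true_and]
        constructor
        · rintro ⟨n, rfl⟩; exact (g.1 n).2
        · intro hx
          obtain ⟨n, hn⟩ := g.2 ⟨x, hx⟩
          exact ⟨n, by rw [hn]⟩⟩
      left_inv := fun f => Subtype.ext rfl
      right_inv := fun g => Subtype.ext (funext fun n => Subtype.ext rfl) }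
  have e : (S : Type _) ≃ Fin S.card := S.equivFin
  have e2 : {g : Fin N → S // Function.Surjective g} ≃
      {g : Fin N → Fin S.card // Function.Surjective g} :=
    Equiv.subtypeEquiv (Equiv.arrowCongr (Equiv.refl (Fin N)) e) (fun g => by
      simp only [Equiv.arrowCongr, Equiv.coe_fn_mk, Equiv.refl_symm, Equiv.coe_refl,
        Function.comp_id]
      exact (Equiv.comp_surjective _ _).symm)
  exact Fintype.card_congr (e1.trans e2)

lemma countA (N M K : ℕ) :
    Fintype.card {f : Fin N → Fin M // (Finset.univ.image f).card ≤ K}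
      = ∑ i ∈ Finset.range (K + 1), M.choose i * surjCount N i := by
  rw [Fintype.card_subtype]
  set s := Finset.univ.filter (fun f : Fin N → Fin M => (Finset.univ.image f).card ≤ K) with hs
  set T := Finset.univ.powerset.filter (fun S : Finset (Fin M) => S.card ≤ K) with hT
  have h1 : s.card = ∑ S ∈ T, (s.filter (fun f => Finset.univ.image f = S)).card := by
    apply Finset.card_eq_sum_card_fiberwise
    intro f hf
    simp only [hs, Finset.mem_filter, Finset.mem_univ, true_and] at hf
    simp only [hT, Finset.mem_filter, Finset.mem_powerset]
    exact Finset.mem_filter.mpr ⟨Finset.mem_powerset.mpr (Finset.subset_univ _), by simpa [hs] using hf⟩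
  have h2 : ∀ S ∈ T, (s.filter (fun f => Finset.univ.image f = S)).card
      = surjCount N S.card := by
    intro S hS
    simp only [hT, Finset.mem_filter, Finset.mem_powerset] at hS
    rw [← fiber_card]
    congr 1
    ext f
    simp only [hs, Finset.mem_filter, Finset.mem_univ, true_and, and_iff_right_iff_imp]
    intro h; rw [h]; exact hS.2
  rw [h1, Finset.sum_congr rfl h2]
  have h3 : ∑ S ∈ T, surjCount N S.card
      = ∑ i ∈ Finset.range (K + 1), ∑ S ∈ T.filter (fun S => S.card = i), surjCount N S.card := by
    rw [Finset.sum_fiberwise_of_maps_to]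
    intro S hS
    simp only [hT, Finset.mem_filter, Finset.mem_powerset] at hS
    exact Finset.mem_range.mpr (Nat.lt_succ_of_le hS.2)
  rw [h3]
  apply Finset.sum_congr rfl
  intro i hi
  have hiK : i ≤ K := Nat.lt_succ_iff.mp (Finset.mem_range.mp hi)
  have h4 : T.filter (fun S => S.card = i) = Finset.powersetCard i Finset.univ := by
    ext S
    simp only [hT, Finset.mem_filter, Finset.mem_powerset, Finset.mem_powersetCard]
    constructor
    · rintro ⟨⟨h1', -⟩, h2'⟩; exact ⟨h1', h2'⟩
    · rintro ⟨h1', h2'⟩; exact ⟨⟨h1', h2' ▸ hiK⟩, h2'⟩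
  rw [Finset.sum_congr h4 (fun S hS => by
    rw [(Finset.mem_powersetCard.mp hS).2]), Finset.sum_const, smul_eq_mul,
    Finset.card_powersetCard, Finset.card_univ, Fintype.card_fin]

lemma choose_ratio {M M₀ K i : ℕ} (hi : i ≤ K) (hK : K ≤ M₀) (h : M₀ ≤ M) :
    M.choose i * M₀.choose K ≤ M.choose K * M₀.choose i := by
  have hKM : K ≤ M := hK.trans h
  have h1 := Nat.choose_mul (n := M) hi   -- M.choose K * K.choose i = M.choose i * (M-i).choose (K-i)
  have h2 := Nat.choose_mul (n := M₀) hi    -- M₀.choose K * K.choose i = M₀.choose i * (M₀-i).choose (K-i)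
  have hpos : 0 < K.choose i := Nat.choose_pos hi
  apply Nat.le_of_mul_le_mul_right _ hpos
  calc M.choose i * M₀.choose K * K.choose i
      = M.choose i * (M₀.choose i * (M₀ - i).choose (K - i)) := by rw [mul_assoc, h2]
    _ ≤ M.choose i * (M₀.choose i * (M - i).choose (K - i)) := by
        apply Nat.mul_le_mul_left
        exact Nat.mul_le_mul_left _ (Nat.choose_le_choose _ (Nat.sub_le_sub_right h i))
    _ = M₀.choose i * (M.choose i * (M - i).choose (K - i)) := by ring
    _ = M₀.choose i * (M.choose K * K.choose i) := by rw [h1]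
    _ = M.choose K * M₀.choose i * K.choose i := by ring

lemma main_nat (N M M₀ K : ℕ) (hKM₀ : K ≤ M₀) (hM₀M : M₀ ≤ M) :
    (∑ i ∈ Finset.range (K + 1), M.choose i * surjCount N i) * M₀.choose K
      ≤ M.choose K * M₀ ^ N := by
  have step1 : (∑ i ∈ Finset.range (K + 1), M.choose i * surjCount N i) * M₀.choose K
      ≤ M.choose K * ∑ i ∈ Finset.range (K + 1), M₀.choose i * surjCount N i := by
    rw [Finset.sum_mul, Finset.mul_sum]
    apply Finset.sum_le_sum
    intro i hi
    have hiK : i ≤ K := Nat.lt_succ_iff.mp (Finset.mem_range.mp hi)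
    calc M.choose i * surjCount N i * M₀.choose K
        = M.choose i * M₀.choose K * surjCount N i := by ring
      _ ≤ M.choose K * M₀.choose i * surjCount N i :=
          Nat.mul_le_mul_right _ (choose_ratio hiK hKM₀ hM₀M)
      _ = M.choose K * (M₀.choose i * surjCount N i) := by ring
  have step2 : ∑ i ∈ Finset.range (K + 1), M₀.choose i * surjCount N i ≤ M₀ ^ N := by
    rw [← countA N M₀ K]
    calc Fintype.card {f : Fin N → Fin M₀ // (Finset.univ.image f).card ≤ K}
        ≤ Fintype.card (Fin N → Fin M₀) := Fintype.card_subtype_le _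
      _ = M₀ ^ N := by rw [Fintype.card_fun, Fintype.card_fin, Fintype.card_fin]
  exact step1.trans (Nat.mul_le_mul_left _ step2)

end BallsAux

/-- For `1 ≤ N`, `1 ≤ K ≤ M₀ ≤ M`:
`p(N, M, K) ≤ (C(M,K)/C(M₀,K)) · (M₀/M)^N`. -/
theorem ballsProb_upper_bound (N M M₀ K : ℕ) (hN : 1 ≤ N) (hK : 1 ≤ K)
    (hKM₀ : K ≤ M₀) (hM₀M : M₀ ≤ M) :
    ballsProb N M K ≤ ((M.choose K : ℝ) / (M₀.choose K : ℝ)) * ((M₀ : ℝ) / (M : ℝ)) ^ N := by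
  have hM : 1 ≤ M := le_trans (hK.trans hKM₀) hM₀M
  have hMpos : (0 : ℝ) < (M : ℝ) ^ N := by positivity
  have hCpos : (0 : ℝ) < (M₀.choose K : ℝ) := by
    exact_mod_cast Nat.choose_pos hKM₀
  have hnat := BallsAux.main_nat N M M₀ K hKM₀ hM₀M
  have hreal : (Fintype.card {f : Fin N → Fin M // (Finset.univ.image f).card ≤ K} : ℝ)
      * (M₀.choose K : ℝ) ≤ (M.choose K : ℝ) * (M₀ : ℝ) ^ N := by
    rw [BallsAux.countA N M K]
    exact_mod_cast hnat
  unfold ballsProb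
  rw [div_pow, div_mul_div_comm, div_le_div_iff₀ hMpos (by positivity)]
  calc (Fintype.card {f : Fin N → Fin M // (Finset.univ.image f).card ≤ K} : ℝ)
      * ((M₀.choose K : ℝ) * (M : ℝ) ^ N)
      = ((Fintype.card {f : Fin N → Fin M // (Finset.univ.image f).card ≤ K} : ℝ)
          * (M₀.choose K : ℝ)) * (M : ℝ) ^ N := by ring
    _ ≤ ((M.choose K : ℝ) * (M₀ : ℝ) ^ N) * (M : ℝ) ^ N :=
        mul_le_mul_of_nonneg_right hreal hMpos.le
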